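/- Let G be a connected graph (with a loop at every vertex), r ≡ 0 (mod 3), r ≥ 6, diam(G) ≥ r. Let x, y be vertices with d(x,y) ∈ {r, r+1}. If there exists a vertex z with d(z,x) ≥ r−1 and d(z,y) ≥ r−1, then x is sufficient or y is sufficient. -/

import Mathlib

/-- The ball of radius `r` around `v` (the `r`-th neighbourhood `N^r(v)`). -/
def SimpleGraph.ballOfRadius {V : Type*} (G : SimpleGraph V) (r : ℕ) (v : V) : Set V :=
  {u : V | G.dist v u ≤ r}

/-- A vertex is *sufficient* if `|N^r(v)| ≥ (r/3 + 1)·δ`, where `δ = G.minDegree + 1`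
is the minimum degree of the graph with a loop at every vertex. -/
def SimpleGraph.Sufficient {V : Type*} [Fintype V] (G : SimpleGraph V)
    [DecidableRel G.Adj] (r : ℕ) (v : V) : Prop :=
  (r / 3 + 1) * (G.minDegree + 1) ≤ (G.ballOfRadius r v).ncard

private lemma walk_getVert_dist_le {V : Type*} {G : SimpleGraph V} (hG : G.Connected) :
    ∀ {a b : V} (p : G.Walk a b) (t : ℕ),
      G.dist a (p.getVert t) ≤ t ∧ G.dist (p.getVert t) b ≤ p.length - t := by
  intro a b p
  induction p with
  | nil => intro t; simp [SimpleGraph.Walk.getVert, SimpleGraph.dist_self]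
  | @cons a a' b h q ih =>
    intro t
    match t with
    | 0 =>
      refine ⟨by simp, ?_⟩
      simpa using SimpleGraph.dist_le (SimpleGraph.Walk.cons h q)
    | (t + 1) =>
      have hgv : (SimpleGraph.Walk.cons h q).getVert (t + 1) = q.getVert t := rfl
      rw [hgv]
      obtain ⟨ih1, ih2⟩ := ih t
      constructor
      · have htri := hG.dist_triangle (u := a) (v := a') (w := q.getVert t)
        have h1 : G.dist a a' = 1 := SimpleGraph.dist_eq_one_iff_adj.mpr h
        omega
      · have : (SimpleGraph.Walk.cons h q).length = q.length + 1 := by simp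
        omega

private lemma exists_dist_split {V : Type*} {G : SimpleGraph V} (hG : G.Connected)
    (a b : V) (t : ℕ) (ht : t ≤ G.dist a b) :
    ∃ u : V, G.dist a u = t ∧ G.dist u b + t = G.dist a b := by
  obtain ⟨p, hp⟩ := hG.exists_walk_length_eq_dist a b
  obtain ⟨h1, h2⟩ := walk_getVert_dist_le hG p t
  have htri := hG.dist_triangle (u := a) (v := p.getVert t) (w := b)
  exact ⟨p.getVert t, by omega, by omega⟩

private lemma suff_aux {V : Type*} [Fintype V] (G : SimpleGraph V) [DecidableRel G.Adj]
    (hG : G.Connected) (r : ℕ) (hr3 : r % 3 = 0) (hr : 6 ≤ r)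
    (x y z : V) (hd : G.dist x y = r ∨ G.dist x y = r + 1)
    (hzx : r - 1 ≤ G.dist z x) (hzy : r - 1 ≤ G.dist z y)
    (hle : G.dist z x ≤ G.dist z y) : G.Sufficient r x := by
  classical
  have hdl : r ≤ G.dist x y ∧ G.dist x y ≤ r + 1 := by rcases hd with h | h <;> omega
  have exz : G.dist x z = G.dist z x := SimpleGraph.dist_comm ..
  -- the point at distance r-1 from x on a geodesic from x to y
  obtain ⟨w, hw1, hw2⟩ := exists_dist_split hG x y (r - 1) (by omega)
  -- the points at distance 3i+2 from x on a geodesic from x to z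
  have hc : ∀ i : ℕ, ∃ u : V, i < r / 3 →
      G.dist x u = 3 * i + 2 ∧ G.dist u z + (3 * i + 2) = G.dist x z := by
    intro i
    by_cases hi : i < r / 3
    · obtain ⟨u, h1, h2⟩ := exists_dist_split hG x z (3 * i + 2) (by omega)
      exact ⟨u, fun _ => ⟨h1, h2⟩⟩
    · exact ⟨x, fun h => absurd h hi⟩
  choose c hc using hc
  -- closed neighbourhoods
  have hmemN : ∀ v a : V, a ∈ insert v (G.neighborFinset v) → G.dist v a ≤ 1 := by
    intro v a ha
    rcases Finset.mem_insert.mp ha with h | h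
    · subst h
      rw [SimpleGraph.dist_self]
      omega
    · exact le_of_eq (SimpleGraph.dist_eq_one_iff_adj.mpr (by simpa using h))
  have hNdisj : ∀ v v' : V, 3 ≤ G.dist v v' →
      Disjoint (insert v (G.neighborFinset v)) (insert v' (G.neighborFinset v')) := by
    intro v v' hvv'
    rw [Finset.disjoint_left]
    intro a hav hav'
    have h1 := hmemN v a hav
    have h2 := hmemN v' a hav'
    have e : G.dist a v' = G.dist v' a := SimpleGraph.dist_comm ..
    have htri := hG.dist_triangle (u := v) (v := a) (w := v')
    omega
  have hNcard : ∀ v : V, G.minDegree + 1 ≤ (insert v (G.neighborFinset v)).card := by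
    intro v
    rw [Finset.card_insert_of_notMem (G.notMem_neighborFinset_self v)]
    have := G.minDegree_le_degree v
    have hdeg : G.degree v = (G.neighborFinset v).card := rfl
    omega
  set B : Finset V := Finset.univ.filter (fun v => G.dist x v ≤ r) with hB
  have hNsub : ∀ v : V, G.dist x v ≤ r - 1 → insert v (G.neighborFinset v) ⊆ B := by
    intro v hv a ha
    have h1 := hmemN v a ha
    have htri := hG.dist_triangle (u := x) (v := v) (w := a)
    simp only [hB, Finset.mem_filter, Finset.mem_univ, true_and]
    omega
  -- distances between centers
  have hcc' : ∀ i j : ℕ, i < r / 3 → j < r / 3 → i < j → 3 ≤ G.dist (c i) (c j) := by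
    intro i j hi hj hij
    have h1 := (hc i hi).1
    have h2 := (hc j hj).1
    have htri := hG.dist_triangle (u := x) (v := c i) (w := c j)
    omega
  have hcc : ∀ i j : ℕ, i < r / 3 → j < r / 3 → i ≠ j → 3 ≤ G.dist (c i) (c j) := by
    intro i j hi hj hne
    rcases lt_or_gt_of_ne hne with h | h
    · exact hcc' i j hi hj h
    · rw [SimpleGraph.dist_comm]; exact hcc' j i hj hi h
  have hcw : ∀ i : ℕ, i < r / 3 → 3 ≤ G.dist (c i) w := by
    intro i hi
    have h1 := (hc i hi).1
    rcases lt_or_ge (i + 1) (r / 3) with h | h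
    · have htri := hG.dist_triangle (u := x) (v := c i) (w := w)
      omega
    · have h2 := (hc i hi).2
      have t1 := hG.dist_triangle (u := z) (v := w) (w := y)
      have t2 := hG.dist_triangle (u := z) (v := c i) (w := w)
      have e1 : G.dist z (c i) = G.dist (c i) z := SimpleGraph.dist_comm ..
      have e2 : G.dist z w = G.dist (c i) w + G.dist z (c i) →
          G.dist z w ≤ G.dist (c i) w + G.dist z (c i) := fun h => le_of_eq h
      omega
  -- the union of the closed neighbourhoods
  set N : ℕ → Finset V := fun i => insert (c i) (G.neighborFinset (c i)) with hN
  set U : Finset V := (Finset.range (r / 3)).biUnion N with hU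
  set W : Finset V := insert w (G.neighborFinset w) with hW
  have hUW : Disjoint U W := by
    rw [Finset.disjoint_biUnion_left]
    intro i hi
    exact hNdisj _ _ (hcw i (Finset.mem_range.mp hi))
  have hsub : U ∪ W ⊆ B := by
    apply Finset.union_subset
    · apply Finset.biUnion_subset.mpr
      intro i hi
      have h1 := (hc i (Finset.mem_range.mp hi)).1
      have h2 := Finset.mem_range.mp hi
      exact hNsub (c i) (by omega)
    · exact hNsub w (by omega)
  have hUcard : (r / 3) * (G.minDegree + 1) ≤ U.card := by
    rw [hU, Finset.card_biUnion (fun i hi j hj hne =>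
      hNdisj _ _ (hcc i j (Finset.mem_range.mp hi) (Finset.mem_range.mp hj) hne))]
    calc (r / 3) * (G.minDegree + 1)
        = ∑ _i ∈ Finset.range (r / 3), (G.minDegree + 1) := by
          rw [Finset.sum_const, Finset.card_range, smul_eq_mul]
      _ ≤ ∑ i ∈ Finset.range (r / 3), (N i).card :=
          Finset.sum_le_sum fun i _ => hNcard (c i)
  have hcard : (r / 3 + 1) * (G.minDegree + 1) ≤ B.card := by
    have h1 : (U ∪ W).card = U.card + W.card := Finset.card_union_of_disjoint hUW
    have h2 := Finset.card_le_card hsub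
    have h3 : G.minDegree + 1 ≤ W.card := by rw [hW]; exact hNcard w
    have : (r / 3 + 1) * (G.minDegree + 1) = (r / 3) * (G.minDegree + 1) + (G.minDegree + 1) := by
      ring
    omega
  have hball : G.ballOfRadius r x = ↑B := by
    ext v
    simp [SimpleGraph.ballOfRadius, hB]
  rw [SimpleGraph.Sufficient, hball, Set.ncard_coe_finset]
  exact hcard

/-- if `r ≡ 0 (mod 3)`, `r ≥ 6`, `diam(G) ≥ r`, `d(x,y) ∈ {r, r+1}` and
some vertex `z` satisfies `d(z,x) ≥ r−1` and `d(z,y) ≥ r−1`, then `x` or `y` is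
sufficient. -/
theorem edge_growth_far_pair_sufficient {V : Type*} [Fintype V]
    (G : SimpleGraph V) [DecidableRel G.Adj] (hG : G.Connected)
    (r : ℕ) (hr3 : r % 3 = 0) (hr : 6 ≤ r)
    (hdiam : ∃ u w : V, r ≤ G.dist u w)
    (x y : V) (hd : G.dist x y = r ∨ G.dist x y = r + 1)
    (z : V) (hzx : r - 1 ≤ G.dist z x) (hzy : r - 1 ≤ G.dist z y) :
    G.Sufficient r x ∨ G.Sufficient r y := by
  rcases le_total (G.dist z x) (G.dist z y) with h | h
  · exact Or.inl (suff_aux G hG r hr3 hr x y z hd hzx hzy h)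
  · exact Or.inr (suff_aux G hG r hr3 hr y x z
      (by rwa [SimpleGraph.dist_comm]) hzy hzx h)
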